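/- arXiv:1202.2566 — 2 statements merged into one kernel-verified Lean document; each statement's English description precedes it below -/
import Mathlib

section
/- Let r ≥ 1 and m ≥ 2 be integers, let G = (ZMod m)^r (the homocyclic group of exponent m and rank r), and let S = {e_1, ..., e_r} be the set of standard basis vectors. Order G lexicographically: identify each element of G with its coordinate tuple (x_1, ..., x_r) with each x_i ∈ {0, 1, ..., m−1}, ordered lexicographically, and for 0 ≤ n ≤ m^r let I_n denote the set of the n lexicographically smallest elements of G. Then ∂_S(I_n) = m^r · ω_m(n/m^r). -/
/-- Distance from `x` to the nearest integer: `‖x‖`. -/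
noncomputable def nearestIntDist (x : ℝ) : ℝ := |x - (round x : ℝ)|

/-- The generalized Takagi function
`ω_m(x) = ∑_{k=0}^∞ m^{-k} ‖m^k x‖_{1/m}`, where `‖·‖_α = min{‖·‖, α}`. -/
noncomputable def omegaT (m : ℕ) (x : ℝ) : ℝ :=
  ∑' k : ℕ, ((m : ℝ) ^ k)⁻¹ * min (nearestIntDist ((m : ℝ) ^ k * x)) (1 / m)

/-- The directed edge boundary `∂_S(A) = |{(a,s) ∈ A × S : a + s ∉ A}|`. -/
def edgeBoundary {G : Type*} [AddCommGroup G] [Fintype G] [DecidableEq G]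
    (S A : Finset G) : ℕ :=
  ((A ×ˢ S).filter fun p => p.1 + p.2 ∉ A).card

/-- The rank of `g : (ZMod m)^r` in the lexicographic order on coordinate
tuples `(x_1, …, x_r)`, `x_i ∈ {0, …, m-1}` (coordinate `1` most significant):
this is just the value of the base-`m` number with digits `x_1 x_2 ⋯ x_r`. -/
def lexRank (m r : ℕ) (g : Fin r → ZMod m) : ℕ :=
  ∑ i : Fin r, (g i).val * m ^ (r - 1 - (i : ℕ))

/-- The set of the `n` lexicographically smallest elements of `(ZMod m)^r`. -/
def lexSegment (m r : ℕ) [NeZero m] (n : ℕ) : Finset (Fin r → ZMod m) :=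
  Finset.univ.filter fun g => lexRank m r g < n

section Aux

open Finset

variable {m r : ℕ} [NeZero m]

/-- Auxiliary: the (reversed) digit map into `Fin m`. -/
private def toFinMap (g : Fin r → ZMod m) : Fin r → Fin m :=
  fun i => ⟨(g i.rev).val, ZMod.val_lt _⟩

private lemma lexRank_eq_equiv (g : Fin r → ZMod m) :
    lexRank m r g = (finFunctionFinEquiv (toFinMap g) : ℕ) := by
  rw [finFunctionFinEquiv_apply, lexRank]
  refine Fintype.sum_bijective Fin.rev Fin.rev_bijective _ _ fun i => ?_
  simp only [toFinMap, Fin.rev_rev]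
  congr 1
  rw [Fin.val_rev]
  congr 1
  omega

private lemma lexRank_lt (g : Fin r → ZMod m) : lexRank m r g < m ^ r := by
  rw [lexRank_eq_equiv]; exact (finFunctionFinEquiv (toFinMap g)).isLt

private lemma lexRank_digit (g : Fin r → ZMod m) (i : Fin r) :
    lexRank m r g / m ^ (r - 1 - (i : ℕ)) % m = (g i).val := by
  have h : finFunctionFinEquiv.symm (finFunctionFinEquiv (toFinMap g)) i.rev
      = toFinMap g i.rev := by rw [Equiv.symm_apply_apply]
  have h3 : (finFunctionFinEquiv (toFinMap g) : ℕ) / m ^ ((i.rev : ℕ)) % m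
      = (toFinMap g i.rev : ℕ) := congrArg Fin.val h
  rw [← lexRank_eq_equiv] at h3
  have h4 : ((i.rev : ℕ)) = r - 1 - (i : ℕ) := by rw [Fin.val_rev]; omega
  rw [h4] at h3
  rw [h3]
  show ((g i.rev.rev).val) = (g i).val
  rw [Fin.rev_rev]

private lemma card_lexRank (P : ℕ → Prop) [DecidablePred P] :
    (univ.filter fun g : Fin r → ZMod m => P (lexRank m r g)).card
      = ((range (m ^ r)).filter P).card := by
  refine Finset.card_bij (fun g _ => lexRank m r g) ?_ ?_ ?_
  · intro g hg
    simp only [mem_filter, mem_univ, true_and] at hg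
    simp only [mem_filter, mem_range]
    exact ⟨lexRank_lt g, hg⟩
  · intro g _ g' _ hgg
    have h : toFinMap g = toFinMap g' := by
      apply finFunctionFinEquiv.injective
      apply Fin.val_injective
      rw [← lexRank_eq_equiv, ← lexRank_eq_equiv]; exact hgg
    funext i
    apply ZMod.val_injective
    have h2 := congrArg Fin.val (congrFun h i.rev)
    simpa [toFinMap, Fin.rev_rev] using h2
  · intro x hx
    simp only [mem_filter, mem_range] at hx
    set g0 : Fin r → ZMod m :=
      fun i => (((finFunctionFinEquiv.symm ⟨x, hx.1⟩ i.rev : Fin m) : ℕ) : ZMod m) with hg0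
    have key : toFinMap g0 = finFunctionFinEquiv.symm ⟨x, hx.1⟩ := by
      funext j
      apply Fin.val_injective
      show (g0 j.rev).val = _
      rw [hg0]
      simp only [Fin.rev_rev]
      exact ZMod.val_cast_of_lt (Fin.is_lt _)
    have hval : lexRank m r g0 = x := by
      rw [lexRank_eq_equiv, key, Equiv.apply_symm_apply]
    exact ⟨g0, by simp only [mem_filter, mem_univ, true_and, hval]; exact hx.2, hval⟩

private lemma edgeBoundary_eq_sum {G : Type*} [AddCommGroup G] [Fintype G] [DecidableEq G]
    (S A : Finset G) :
    edgeBoundary S A = ∑ s ∈ S, (A.filter fun a => a + s ∉ A).card := by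
  rw [edgeBoundary, Finset.card_filter, Finset.sum_product, Finset.sum_comm]
  simp_rw [Finset.card_filter]

private lemma single_injective (hm : 2 ≤ m) :
    Function.Injective (fun i : Fin r => Pi.single i (1 : ZMod m)) := by
  haveI : Fact (1 < m) := ⟨hm⟩
  intro i j h
  by_contra hij
  have h2 := congrFun h i
  simp only [Pi.single_eq_same, Pi.single_eq_of_ne hij] at h2
  exact one_ne_zero h2

private lemma lexRank_add_single (g : Fin r → ZMod m) (i : Fin r) :
    lexRank m r (g + Pi.single i 1) + (g i).val * m ^ (r - 1 - (i : ℕ))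
      = lexRank m r g + (((g i).val + 1) % m) * m ^ (r - 1 - (i : ℕ)) := by
  set g' : Fin r → ZMod m := g + Pi.single i 1 with hg'
  have h1 : ∀ j ∈ (Finset.univ : Finset (Fin r)).erase i,
      (g' j).val * m ^ (r - 1 - (j : ℕ)) = (g j).val * m ^ (r - 1 - (j : ℕ)) := by
    intro j hj
    have hji : j ≠ i := (Finset.mem_erase.mp hj).1
    simp only [hg', Pi.add_apply, Pi.single_eq_of_ne hji, add_zero]
  have e1 : (g' i).val * m ^ (r - 1 - (i : ℕ))
      + ∑ j ∈ (Finset.univ : Finset (Fin r)).erase i, (g' j).val * m ^ (r - 1 - (j : ℕ))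
      = ∑ j : Fin r, (g' j).val * m ^ (r - 1 - (j : ℕ)) :=
    Finset.add_sum_erase _ (fun j : Fin r => (g' j).val * m ^ (r - 1 - (j : ℕ)))
      (Finset.mem_univ i)
  have e2 : (g i).val * m ^ (r - 1 - (i : ℕ))
      + ∑ j ∈ (Finset.univ : Finset (Fin r)).erase i, (g j).val * m ^ (r - 1 - (j : ℕ))
      = ∑ j : Fin r, (g j).val * m ^ (r - 1 - (j : ℕ)) :=
    Finset.add_sum_erase _ (fun j : Fin r => (g j).val * m ^ (r - 1 - (j : ℕ)))
      (Finset.mem_univ i)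
  have hval : (g' i).val = ((g i).val + 1) % m := by
    simp only [hg', Pi.add_apply, Pi.single_eq_same]
    rw [ZMod.val_add, ZMod.val_one_eq_one_mod, Nat.add_mod_mod]
  have hA : lexRank m r g'
      = (((g i).val + 1) % m) * m ^ (r - 1 - (i : ℕ))
        + ∑ j ∈ (Finset.univ : Finset (Fin r)).erase i,
            (g j).val * m ^ (r - 1 - (j : ℕ)) := by
    rw [lexRank, ← e1, hval, Finset.sum_congr rfl h1]
  have hB : lexRank m r g
      = (g i).val * m ^ (r - 1 - (i : ℕ))
        + ∑ j ∈ (Finset.univ : Finset (Fin r)).erase i,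
            (g j).val * m ^ (r - 1 - (j : ℕ)) := by
    rw [lexRank, ← e2]
  rw [hA, hB]; ring

private lemma count_dir (hm : 2 ≤ m) (n : ℕ) (i : Fin r) :
    ((lexSegment m r n).filter fun a => a + Pi.single i (1 : ZMod m) ∉ lexSegment m r n).card
      = ((range (m ^ r)).filter fun x =>
          x < n ∧ n ≤ x + m ^ (r - 1 - (i : ℕ)) ∧ x / m ^ (r - 1 - (i : ℕ)) % m ≠ m - 1).card := by
  rw [lexSegment, Finset.filter_filter]
  have hcong : (Finset.univ.filter fun a : Fin r → ZMod m =>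
        lexRank m r a < n ∧
          (a + Pi.single i 1) ∉ Finset.univ.filter fun g => lexRank m r g < n)
      = (Finset.univ.filter fun a : Fin r → ZMod m =>
          lexRank m r a < n ∧ n ≤ lexRank m r a + m ^ (r - 1 - (i : ℕ)) ∧
            lexRank m r a / m ^ (r - 1 - (i : ℕ)) % m ≠ m - 1) := by
    apply Finset.filter_congr
    intro a _
    simp only [Finset.mem_filter, Finset.mem_univ, true_and, not_lt]
    have hdig := lexRank_digit a i
    have hkey := lexRank_add_single a i
    have hvlt : (a i).val < m := ZMod.val_lt _
    rw [hdig]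
    by_cases hc : (a i).val = m - 1
    · have hmod0 : ((a i).val + 1) % m = 0 := by
        rw [hc, Nat.sub_add_cancel (by omega), Nat.mod_self]
      rw [hmod0, zero_mul, add_zero] at hkey
      have hle : lexRank m r (a + Pi.single i 1) ≤ lexRank m r a :=
        hkey ▸ Nat.le_add_right _ _
      constructor
      · rintro ⟨hLn, hnL'⟩
        exact absurd (lt_of_le_of_lt hle hLn) (not_lt.mpr hnL')
      · rintro ⟨_, _, h3⟩
        exact absurd hc h3
    · have hmod1 : ((a i).val + 1) % m = (a i).val + 1 := Nat.mod_eq_of_lt (by omega)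
      have hL' : lexRank m r (a + Pi.single i 1)
          = lexRank m r a + m ^ (r - 1 - (i : ℕ)) := by
        have h2 : lexRank m r (a + Pi.single i 1) + (a i).val * m ^ (r - 1 - (i : ℕ))
            = (lexRank m r a + m ^ (r - 1 - (i : ℕ)))
                + (a i).val * m ^ (r - 1 - (i : ℕ)) := by
          rw [hkey, hmod1]; ring
        exact Nat.add_right_cancel h2
      rw [hL']
      constructor
      · rintro ⟨h1, h2⟩; exact ⟨h1, h2, hc⟩
      · rintro ⟨h1, h2, _⟩; exact ⟨h1, h2⟩
  rw [hcong]
  exact card_lexRank (fun x => x < n ∧ n ≤ x + m ^ (r - 1 - (i : ℕ)) ∧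
    x / m ^ (r - 1 - (i : ℕ)) % m ≠ m - 1)

end Aux

/-- The pure arithmetic count. -/
private lemma count_range_pred (m w n N : ℕ) (hm : 2 ≤ m) (hw : 0 < w) (hn : n ≤ N) :
    ((Finset.range N).filter fun x => x < n ∧ n ≤ x + w ∧ x / w % m ≠ m - 1).card
      = min w (min (n % (m * w)) (m * w - n % (m * w))) := by
  obtain ⟨q, s, hq, hs⟩ : ∃ q s, n = w * q + s ∧ s < w :=
    ⟨n / w, n % w, (Nat.div_add_mod n w).symm, Nat.mod_lt _ hw⟩
  obtain ⟨k, d, hqd, hd⟩ : ∃ k d, q = m * k + d ∧ d < m :=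
    ⟨q / m, q % m, (Nat.div_add_mod q m).symm, Nat.mod_lt _ (by omega)⟩
  have hdiv : ∀ x a : ℕ, w * a ≤ x → x < w * a + w → x / w = a := by
    intro x a h1 h2
    have e : (a + 1) * w = w * a + w := by ring
    exact Nat.div_eq_of_lt_le (by rw [Nat.mul_comm]; exact h1) (by rw [e]; exact h2)
  have hmod : ∀ a b : ℕ, b < m → (m * a + b) % m = b := by
    intro a b hb; rw [Nat.mul_add_mod]; exact Nat.mod_eq_of_lt hb
  have ht : n % (m * w) = d * w + s := by
    have h1 : n = (m * w) * k + (d * w + s) := by rw [hq, hqd]; ring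
    rw [h1, Nat.mul_add_mod]
    refine Nat.mod_eq_of_lt ?_
    calc d * w + s < d * w + w := by omega
      _ = (d + 1) * w := by ring
      _ ≤ m * w := Nat.mul_le_mul_right w (by omega)
  -- digit at q
  have hdq : q % m = d := by rw [hqd]; exact hmod k d hd
  -- useful: n ≤ w * q + w and w * q ≤ n
  have hn1 : n < w * q + w := by rw [hq]; exact Nat.add_lt_add_left hs (w * q)
  have hn2 : w * q ≤ n := by rw [hq]; exact Nat.le_add_right _ _
  have hdivq : ∀ x, w * q ≤ x → x < n → x / w = q := fun x h1 h2 =>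
    hdiv x q h1 (lt_trans h2 hn1)
  have hq1w : 1 ≤ q → w * (q - 1) + w = w * q := by
    intro hq1
    calc w * (q - 1) + w = w * ((q - 1) + 1) := by ring
      _ = w * q := by rw [Nat.sub_add_cancel hq1]
  have hdivq' : ∀ x, 1 ≤ q → n ≤ x + w → x < w * q → x / w = q - 1 := by
    intro x hq1 h1 h2
    apply hdiv x (q - 1)
    · have h3 : w * (q - 1) + w ≤ x + w := by
        rw [hq1w hq1]; exact le_trans hn2 h1
      exact Nat.le_of_add_le_add_right h3
    · rw [hq1w hq1]; exact h2
  have hqpos : ∀ x : ℕ, x < w * q → 1 ≤ q := by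
    intro x hx
    rcases Nat.eq_zero_or_pos q with h | h
    · rw [h, Nat.mul_zero] at hx; omega
    · exact h
  rw [ht]
  by_cases hd0 : d = 0
  · -- digits: x in [w*q, n) has digit 0; below that digit m-1
    subst hd0
    have hqk : q = m * k := by rw [hqd, Nat.add_zero]
    have hset : ((Finset.range N).filter fun x =>
          x < n ∧ n ≤ x + w ∧ x / w % m ≠ m - 1) = Finset.Ico (w * q) n := by
      ext x
      simp only [Finset.mem_filter, Finset.mem_range, Finset.mem_Ico]
      constructor
      · rintro ⟨_, hxn, hnx, hdig⟩
        refine ⟨?_, hxn⟩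
        by_contra hlt
        push_neg at hlt
        have hq1 : 1 ≤ q := hqpos x hlt
        have hk1 : 1 ≤ k := by
          rcases Nat.eq_zero_or_pos k with h | h
          · rw [h, Nat.mul_zero] at hqk; omega
          · exact h
        have hxdiv : x / w = q - 1 := hdivq' x hq1 hnx hlt
        have hq1m : q - 1 = m * (k - 1) + (m - 1) := by
          have e : m * (k - 1) + m = m * k := by
            calc m * (k - 1) + m = m * ((k - 1) + 1) := by ring
              _ = m * k := by rw [Nat.sub_add_cancel hk1]
          rw [hqk, ← e, Nat.add_sub_assoc (by omega)]
        apply hdig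
        rw [hxdiv, hq1m]
        exact hmod (k - 1) (m - 1) (by omega)
      · rintro ⟨h1, h2⟩
        refine ⟨lt_of_lt_of_le h2 hn, h2, ?_, ?_⟩
        · calc n ≤ w * q + s := le_of_eq hq
            _ ≤ x + s := Nat.add_le_add_right h1 s
            _ ≤ x + w := Nat.add_le_add_left (le_of_lt hs) x
        · rw [hdivq x h1 h2, hdq]
          omega
    rw [hset, Nat.card_Ico]
    have hW2 : m * w = w + (m - 1) * w := by
      calc m * w = ((m - 1) + 1) * w := by rw [Nat.sub_add_cancel (by omega)]
        _ = w + (m - 1) * w := by ring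
    have hns : n - w * q = s := by rw [hq, Nat.add_sub_cancel_left]
    rw [hns, zero_mul, zero_add, hW2]
    have hV : w ≤ (m - 1) * w := Nat.le_mul_of_pos_left w (by omega)
    generalize (m - 1) * w = V at hV ⊢
    omega
  · by_cases hdm : d = m - 1
    · -- top digit
      subst hdm
      have hq1 : 1 ≤ q := hqd ▸ le_trans (by omega) (Nat.le_add_left (m - 1) (m * k))
      have hwn : w ≤ n := by
        calc w = w * 1 := by ring
          _ ≤ w * q := Nat.mul_le_mul_left w hq1
          _ ≤ n := hn2
      have hset : ((Finset.range N).filter fun x =>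
            x < n ∧ n ≤ x + w ∧ x / w % m ≠ m - 1) = Finset.Ico (n - w) (w * q) := by
        ext x
        simp only [Finset.mem_filter, Finset.mem_range, Finset.mem_Ico]
        constructor
        · rintro ⟨_, hxn, hnx, hdig⟩
          refine ⟨by omega, ?_⟩
          by_contra hge
          push_neg at hge
          have hxdiv : x / w = q := hdivq x hge hxn
          apply hdig
          rw [hxdiv, hdq]
        · rintro ⟨h1, h2⟩
          have hxn : x < n := lt_of_lt_of_le h2 hn2
          refine ⟨lt_of_lt_of_le hxn hn, hxn, by omega, ?_⟩
          have hxdiv : x / w = q - 1 := hdivq' x hq1 (by omega) h2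
          have hq1m : q - 1 = m * k + (m - 2) := by
            rw [hqd, Nat.add_sub_assoc (by omega : 1 ≤ m - 1),
              show m - 1 - 1 = m - 2 by omega]
          rw [hxdiv, hq1m, hmod k (m - 2) (by omega)]
          omega
      rw [hset, Nat.card_Ico]
      have hW2 : m * w = (m - 1) * w + w := by
        calc m * w = ((m - 1) + 1) * w := by rw [Nat.sub_add_cancel (by omega)]
          _ = (m - 1) * w + w := by ring
      have hV : w ≤ (m - 1) * w := Nat.le_mul_of_pos_left w (by omega)
      have hPw : w ≤ w * q := Nat.le_mul_of_pos_right w hq1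
      rw [hq, hW2]
      generalize (m - 1) * w = U at hV ⊢
      generalize w * q = P at hPw ⊢
      omega
    · -- middle digit : 1 ≤ d ≤ m - 2
      have hd1 : 1 ≤ d := by omega
      have hq1 : 1 ≤ q := hqd ▸ le_trans hd1 (Nat.le_add_left d (m * k))
      have hwn : w ≤ n := by
        calc w = w * 1 := by ring
          _ ≤ w * q := Nat.mul_le_mul_left w hq1
          _ ≤ n := hn2
      have hset : ((Finset.range N).filter fun x =>
            x < n ∧ n ≤ x + w ∧ x / w % m ≠ m - 1) = Finset.Ico (n - w) n := by
        ext x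
        simp only [Finset.mem_filter, Finset.mem_range, Finset.mem_Ico]
        constructor
        · rintro ⟨_, hxn, hnx, _⟩
          exact ⟨by omega, hxn⟩
        · rintro ⟨h1, h2⟩
          refine ⟨lt_of_lt_of_le h2 hn, h2, by omega, ?_⟩
          rcases Nat.lt_or_ge x (w * q) with hc | hc
          · have hxdiv : x / w = q - 1 := hdivq' x hq1 (by omega) hc
            have hq1m : q - 1 = m * k + (d - 1) := by
              rw [hqd, Nat.add_sub_assoc hd1]
            rw [hxdiv, hq1m, hmod k (d - 1) (by omega)]
            omega
          · rw [hdivq x hc h2, hdq]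
            omega
      rw [hset, Nat.card_Ico]
      have hU : w ≤ d * w := Nat.le_mul_of_pos_left w hd1
      have hW2 : d * w + 2 * w ≤ m * w := by
        calc d * w + 2 * w = (d + 2) * w := by ring
          _ ≤ m * w := Nat.mul_le_mul_right w (by omega)
      generalize hUg : d * w = U at hU hW2 ⊢
      generalize hWg : m * w = W at hW2 ⊢
      omega

/-- The real-analytic side: one term. -/
private lemma real_term (m w n : ℕ) (hm : 2 ≤ m) (hw : 0 < w) :
    ((m : ℝ) * w) * min (nearestIntDist ((n : ℝ) / ((m : ℝ) * w))) (1 / m)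
      = ((min w (min (n % (m * w)) (m * w - n % (m * w))) : ℕ) : ℝ) := by
  set M := m * w with hM
  have hM0 : 0 < M := Nat.mul_pos (by omega) hw
  have hMR : (0 : ℝ) < (M : ℝ) := by exact_mod_cast hM0
  obtain ⟨q, t, hqt, htM⟩ : ∃ q t, n = M * q + t ∧ t < M :=
    ⟨n / M, n % M, (Nat.div_add_mod n M).symm, Nat.mod_lt _ hM0⟩
  have htn : n % M = t := by rw [hqt, Nat.mul_add_mod]; exact Nat.mod_eq_of_lt htM
  have hMcast : ((m : ℝ) * w) = (M : ℝ) := by rw [hM]; push_cast; ring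
  have hx : (n : ℝ) / (M : ℝ) = (q : ℝ) + (t : ℝ) / M := by
    rw [hqt]; push_cast
    rw [add_div]
    congr 1
    rw [mul_comm, mul_div_assoc, div_self (ne_of_gt hMR), mul_one]
  have htM' : (t : ℝ) < (M : ℝ) := by exact_mod_cast htM
  have ht0 : (0 : ℝ) ≤ (t : ℝ) := Nat.cast_nonneg t
  have hdist : nearestIntDist ((n : ℝ) / (M : ℝ)) = ((min t (M - t) : ℕ) : ℝ) / M := by
    rcases Nat.lt_or_ge (2 * t) M with h | h
    · have hmin : min t (M - t) = t := by omega
      have hround : round ((n : ℝ) / (M : ℝ)) = (q : ℤ) := by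
        rw [hx, show ((q : ℝ) + (t : ℝ) / M) = (((q : ℤ) : ℝ) + (t : ℝ) / M) by push_cast; ring,
          round_intCast_add]
        have h0 : round ((t : ℝ) / (M : ℝ)) = 0 := by
          rw [round_eq_zero_iff]
          constructor
          · have : (0 : ℝ) ≤ (t : ℝ) / M := div_nonneg ht0 (le_of_lt hMR)
            linarith
          · rw [div_lt_iff₀ hMR]
            have h2 : (2 : ℝ) * t < M := by exact_mod_cast h
            linarith
        rw [h0, add_zero]
      rw [nearestIntDist, hround, hx, hmin]
      push_cast
      rw [add_sub_cancel_left]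
      exact abs_of_nonneg (div_nonneg ht0 (le_of_lt hMR))
    · have hmin : min t (M - t) = M - t := by omega
      have hround : round ((n : ℝ) / (M : ℝ)) = (q : ℤ) + 1 := by
        rw [hx, show ((q : ℝ) + (t : ℝ) / M) = (((q : ℤ) : ℝ) + (t : ℝ) / M) by push_cast; ring,
          round_intCast_add]
        have h12 : (1 : ℝ) / 2 ≤ (t : ℝ) / M := by
          have h2 : (M : ℝ) ≤ (2 : ℝ) * t := by exact_mod_cast h
          rw [div_le_div_iff₀ (by norm_num) hMR]; linarith
        have hlt1 : (t : ℝ) / M < 1 := (div_lt_one hMR).mpr htM'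
        have h1 : round ((t : ℝ) / (M : ℝ)) = 1 := by
          rw [round_eq, Int.floor_eq_iff]
          constructor
          · push_cast; linarith
          · push_cast; linarith
        rw [h1]
      rw [nearestIntDist, hround, hx, hmin]
      have hcast : ((M - t : ℕ) : ℝ) = (M : ℝ) - t := by
        have : t ≤ M := le_of_lt htM
        push_cast [this]; ring
      rw [hcast]
      push_cast
      have he : (q : ℝ) + (t : ℝ) / M - ((q : ℝ) + 1) = (t : ℝ) / M - 1 := by ring
      rw [he, abs_of_nonpos (by rw [sub_nonpos]; exact le_of_lt ((div_lt_one hMR).mpr htM'))]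
      field_simp
      ring
  rw [hMcast, hdist, htn]
  have hmin_mul : (M : ℝ) * min (((min t (M - t) : ℕ) : ℝ) / M) (1 / m)
      = min ((M : ℝ) * (((min t (M - t) : ℕ) : ℝ) / M)) ((M : ℝ) * (1 / m)) :=
    mul_min_of_nonneg _ _ (le_of_lt hMR)
  rw [hmin_mul]
  have h1 : (M : ℝ) * (((min t (M - t) : ℕ) : ℝ) / M) = ((min t (M - t) : ℕ) : ℝ) := by
    field_simp
  have h2 : (M : ℝ) * ((1 : ℝ) / m) = (w : ℝ) := by
    have hm0 : (m : ℝ) ≠ 0 := by positivity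
    rw [hM]; push_cast
    rw [mul_one_div, mul_comm (m : ℝ) (w : ℝ), mul_div_assoc, div_self hm0, mul_one]
  rw [h1, h2]
  push_cast
  exact min_comm _ _


theorem stmt1 {r m : ℕ} [NeZero m] (hr : 1 ≤ r) (hm : 2 ≤ m)
    {n : ℕ} (hn : n ≤ m ^ r) :
    (edgeBoundary
        (Finset.image (fun i : Fin r => Pi.single i (1 : ZMod m)) Finset.univ)
        (lexSegment m r n) : ℝ)
      = (m : ℝ) ^ r * omegaT m ((n : ℝ) / (m : ℝ) ^ r) := by
  have hmR : (m : ℝ) ≠ 0 := by positivity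
  have hmrR : ((m : ℝ) ^ r) ≠ 0 := by positivity
  -- the left side as a sum of counts
  have hL : edgeBoundary
        (Finset.image (fun i : Fin r => Pi.single i (1 : ZMod m)) Finset.univ)
        (lexSegment m r n)
      = ∑ k ∈ Finset.range r,
          min (m ^ (r - 1 - k))
            (min (n % (m * m ^ (r - 1 - k))) (m * m ^ (r - 1 - k) - n % (m * m ^ (r - 1 - k)))) := by
    rw [edgeBoundary_eq_sum, Finset.sum_image (fun i _ j _ h => single_injective hm h)]
    rw [← Fin.sum_univ_eq_sum_range (fun k =>
      min (m ^ (r - 1 - k))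
        (min (n % (m * m ^ (r - 1 - k))) (m * m ^ (r - 1 - k) - n % (m * m ^ (r - 1 - k)))))]
    refine Finset.sum_congr rfl fun i _ => ?_
    rw [count_dir hm n i]
    exact count_range_pred m (m ^ (r - 1 - (i : ℕ))) n (m ^ r) hm
      (Nat.pow_pos (by omega)) hn
  -- the right side as a finite sum
  have hterm0 : ∀ k, r ≤ k →
      ((m : ℝ) ^ k)⁻¹ * min (nearestIntDist ((m : ℝ) ^ k * ((n : ℝ) / (m : ℝ) ^ r))) (1 / m)
        = 0 := by
    intro k hk
    have harg : (m : ℝ) ^ k * ((n : ℝ) / (m : ℝ) ^ r) = ((n * m ^ (k - r) : ℕ) : ℝ) := by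
      have hpow : (m : ℝ) ^ k = (m : ℝ) ^ r * (m : ℝ) ^ (k - r) := by
        rw [← pow_add]; congr 1; omega
      push_cast
      rw [hpow]
      field_simp
    rw [harg, nearestIntDist, round_natCast]
    simp only [Int.cast_natCast, sub_self, abs_zero]
    rw [min_eq_left (by positivity), mul_zero]
  have hsum : omegaT m ((n : ℝ) / (m : ℝ) ^ r)
      = ∑ k ∈ Finset.range r,
          ((m : ℝ) ^ k)⁻¹ * min (nearestIntDist ((m : ℝ) ^ k * ((n : ℝ) / (m : ℝ) ^ r))) (1 / m) := by
    rw [omegaT]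
    exact tsum_eq_sum fun k hk => hterm0 k (by
      simp only [Finset.mem_range, not_lt] at hk; exact hk)
  rw [hL, hsum, Finset.mul_sum, Nat.cast_sum]
  refine Finset.sum_congr rfl fun k hk => ?_
  have hkr : k < r := Finset.mem_range.mp hk
  set w : ℕ := m ^ (r - 1 - k) with hwdef
  have hwpos : 0 < w := Nat.pow_pos (by omega)
  have h1 : (m : ℝ) * (w : ℝ) * (m : ℝ) ^ k = (m : ℝ) ^ r := by
    rw [hwdef]; push_cast
    rw [← pow_succ', ← pow_add]
    congr 1
    omega
  have hpow : (m : ℝ) ^ r * ((m : ℝ) ^ k)⁻¹ = (m : ℝ) * (w : ℝ) := by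
    rw [← h1, mul_assoc, mul_inv_cancel₀ (pow_ne_zero _ hmR), mul_one]
  have harg : (m : ℝ) ^ k * ((n : ℝ) / (m : ℝ) ^ r) = (n : ℝ) / ((m : ℝ) * w) := by
    rw [← h1, ← div_div, mul_comm, div_mul_cancel₀ _ (pow_ne_zero _ hmR)]
  rw [← mul_assoc, hpow, harg]
  exact (real_term m w n hm hwpos).symm
end

section
/- For every real x ∈ (0,1], one has x·log_2(1/x) ≤ ω_2(x) ≤ x·log_2(4/(3x)). -/
lemma nid_nonneg (x : ℝ) : 0 ≤ nearestIntDist x := abs_nonneg _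
lemma nid_le_half (x : ℝ) : nearestIntDist x ≤ 1/2 := abs_sub_round x
lemma nid_int_add (x : ℝ) (n : ℤ) : nearestIntDist (x + n) = nearestIntDist x := by
  unfold nearestIntDist
  rw [round_add_intCast]
  push_cast
  ring_nf
lemma nid_eq_right {x : ℝ} (h0 : 1/2 ≤ x) (h1 : x ≤ 1) : nearestIntDist x = 1 - x := by
  unfold nearestIntDist
  have h : round x = 1 := by
    rw [round_eq]
    have : ⌊x + 1/2⌋ = 1 := by
      rw [show (1 : ℤ) = ((1:ℤ)) from rfl, Int.floor_eq_iff]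
      constructor <;> push_cast <;> linarith
    exact this
  rw [h, abs_sub_comm]
  push_cast
  rw [abs_of_nonneg (by linarith)]
lemma nid_eq_left {x : ℝ} (h0 : 0 ≤ x) (h1 : x ≤ 1/2) : nearestIntDist x = x := by
  rcases lt_or_eq_of_le h1 with h | h
  · unfold nearestIntDist
    have : round x = 0 := by
      rw [round_eq, Int.floor_eq_zero_iff]
      constructor <;> simp <;> linarith
    rw [this]; simp [abs_of_nonneg h0]
  · rw [nid_eq_right (le_of_eq h.symm) (by linarith)]
    linarith

noncomputable def Tak (x : ℝ) : ℝ := ∑' k : ℕ, ((2:ℝ)^k)⁻¹ * nearestIntDist ((2:ℝ)^k * x)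

lemma summable_Tak (x : ℝ) :
    Summable (fun k : ℕ => ((2:ℝ)^k)⁻¹ * nearestIntDist ((2:ℝ)^k * x)) := by
  apply Summable.of_nonneg_of_le
    (fun k => mul_nonneg (by positivity) (nid_nonneg _))
    (fun k => ?_) summable_geometric_two
  have := nid_le_half ((2:ℝ)^k * x)
  have h2 : ((2:ℝ)^k)⁻¹ = (1/2)^k := by
    rw [one_div, inv_pow]
  rw [h2]
  calc ((1:ℝ)/2)^k * nearestIntDist ((2:ℝ)^k * x) ≤ (1/2)^k * 1 := by
        apply mul_le_mul_of_nonneg_left (by linarith) (by positivity)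
    _ = (1/2)^k := by ring

lemma omegaT_two (x : ℝ) : omegaT 2 x = Tak x := by
  unfold omegaT Tak
  apply tsum_congr
  intro k
  rw [min_eq_left (by simpa using nid_le_half (((2:ℕ):ℝ)^k * x))]
  norm_num

lemma Tak_nonneg (x : ℝ) : 0 ≤ Tak x :=
  tsum_nonneg fun k => mul_nonneg (by positivity) (nid_nonneg _)

lemma Tak_le_one (x : ℝ) : Tak x ≤ 1 := by
  have h := Summable.tsum_le_tsum (f := fun k : ℕ => ((2:ℝ)^k)⁻¹ * nearestIntDist ((2:ℝ)^k * x))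
    (g := fun k : ℕ => (1/2:ℝ)^k * (1/2)) (fun k => ?_) (summable_Tak x) ?_
  · calc Tak x ≤ ∑' k : ℕ, (1/2:ℝ)^k * (1/2) := h
      _ = (∑' k : ℕ, (1/2:ℝ)^k) * (1/2) := tsum_mul_right
      _ = 2 * (1/2) := by rw [tsum_geometric_of_lt_one (by norm_num) (by norm_num)]; norm_num
      _ = 1 := by norm_num
  · show ((2:ℝ)^k)⁻¹ * nearestIntDist ((2:ℝ)^k * x) ≤ (1/2:ℝ)^k * (1/2)
    rw [show ((2:ℝ)^k)⁻¹ = (1/2)^k by rw [one_div, inv_pow]]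
    exact mul_le_mul_of_nonneg_left (nid_le_half _) (by positivity)
  · exact (summable_geometric_two).mul_right _

lemma Tak_add_one (x : ℝ) : Tak (x + 1) = Tak x := by
  unfold Tak
  apply tsum_congr
  intro k
  congr 1
  have : (2:ℝ)^k * (x+1) = 2^k * x + ((2^k : ℤ) : ℝ) := by push_cast; ring
  rw [this, nid_int_add]

lemma Tak_eq (x : ℝ) : Tak x = nearestIntDist x + Tak (2*x) / 2 := by
  unfold Tak
  rw [Summable.tsum_eq_zero_add (summable_Tak x)]
  congr 1
  · norm_num
  · rw [eq_div_iff (two_ne_zero), ← tsum_mul_right]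
    apply tsum_congr
    intro k
    have h1 : (2:ℝ)^k * (2*x) = 2^(k+1) * x := by ring
    rw [h1]
    have h2 : ((2:ℝ)^(k+1))⁻¹ * 2 = ((2:ℝ)^k)⁻¹ := by
      rw [pow_succ]
      field_simp
    rw [mul_right_comm, h2]

noncomputable def Ftak (t : ℝ) : ℝ := (1+t)*Real.log (1+t) - t*Real.log t - t*Real.log 4

lemma Ftak_hasDeriv {t : ℝ} (ht : 0 < t) :
    HasDerivAt Ftak (Real.log (1+t) - Real.log t - Real.log 4) t := by
  have h1 : HasDerivAt (fun t : ℝ => (1+t)*Real.log (1+t)) (Real.log (1+t) + 1) t := by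
    have ha : HasDerivAt (fun t : ℝ => 1 + t) 1 t := (hasDerivAt_id t).const_add 1
    have hb : HasDerivAt (fun t : ℝ => Real.log (1+t)) (1/(1+t)) t := by
      simpa [Function.comp_def] using (Real.hasDerivAt_log (by linarith)).comp t ha
    have := ha.fun_mul hb
    refine this.congr_deriv ?_
    field_simp
  have h2 : HasDerivAt (fun t : ℝ => t*Real.log t) (Real.log t + 1) t := by
    have hb : HasDerivAt Real.log (1/t) t := by
      simpa [one_div] using Real.hasDerivAt_log (ne_of_gt ht)
    have := (hasDerivAt_id t).fun_mul hb
    refine this.congr_deriv ?_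
    simp only [id]
    field_simp
  have h3 : HasDerivAt (fun t : ℝ => t*Real.log 4) (Real.log 4) t := by
    simpa using (hasDerivAt_id t).mul_const (Real.log 4)
  have := (h1.fun_sub h2).fun_sub h3
  refine this.congr_deriv ?_
  ring

lemma Ftak_cont : Continuous Ftak := by
  unfold Ftak
  have hc : Continuous (fun t : ℝ => (1:ℝ) + t) := continuous_const.add continuous_id
  have h1 : Continuous (fun t : ℝ => (1+t) * Real.log (1+t)) := by
    have := Real.continuous_mul_log.comp hc
    simpa [Function.comp_def] using this
  exact (h1.sub Real.continuous_mul_log).sub (continuous_id.mul continuous_const)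

lemma Ftak_mono : MonotoneOn Ftak (Set.Icc 0 (1/3)) := by
  apply monotoneOn_of_deriv_nonneg (convex_Icc _ _) Ftak_cont.continuousOn
  · intro t ht
    rw [interior_Icc] at ht
    exact (Ftak_hasDeriv ht.1).differentiableAt.differentiableWithinAt
  · intro t ht
    rw [interior_Icc] at ht
    rw [(Ftak_hasDeriv ht.1).deriv]
    have h4 : Real.log t + Real.log 4 = Real.log (4*t) := by
      rw [Real.log_mul (by norm_num) (ne_of_gt ht.1)]; ring
    have : Real.log (4*t) ≤ Real.log (1+t) :=
      Real.log_le_log (by linarith [ht.1]) (by linarith [ht.2])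
    linarith [h4 ▸ this]

lemma Ftak_anti : AntitoneOn Ftak (Set.Icc (1/3) 1) := by
  apply antitoneOn_of_deriv_nonpos (convex_Icc _ _) Ftak_cont.continuousOn
  · intro t ht
    rw [interior_Icc] at ht
    exact (Ftak_hasDeriv (by linarith [ht.1])).differentiableAt.differentiableWithinAt
  · intro t ht
    rw [interior_Icc] at ht
    have ht0 : (0:ℝ) < t := by linarith [ht.1]
    rw [(Ftak_hasDeriv ht0).deriv]
    have h4 : Real.log t + Real.log 4 = Real.log (4*t) := by
      rw [Real.log_mul (by norm_num) (ne_of_gt ht0)]; ring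
    have : Real.log (1+t) ≤ Real.log (4*t) :=
      Real.log_le_log (by linarith) (by linarith [ht.1])
    linarith [h4 ▸ this]

lemma Ftak_zero : Ftak 0 = 0 := by simp [Ftak]
lemma Ftak_one : Ftak 1 = 0 := by
  unfold Ftak
  rw [show (4:ℝ) = 2^2 by norm_num, Real.log_pow, show (1:ℝ)+1 = 2 by norm_num,
      Real.log_one]
  push_cast
  ring
lemma Ftak_third : Ftak (1/3) = Real.log (4/3) := by
  unfold Ftak
  rw [show (1:ℝ)+1/3 = 4/3 by norm_num,
      Real.log_div (by norm_num) (by norm_num),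
      Real.log_div (one_ne_zero) (by norm_num : (3:ℝ) ≠ 0), Real.log_one]
  ring

lemma Ftak_nonneg {t : ℝ} (h0 : 0 ≤ t) (h1 : t ≤ 1) : 0 ≤ Ftak t := by
  rcases le_total t (1/3) with h | h
  · have := Ftak_mono (Set.mem_Icc.mpr ⟨le_refl 0, by norm_num⟩) (Set.mem_Icc.mpr ⟨h0, h⟩) h0
    rw [Ftak_zero] at this; exact this
  · have := Ftak_anti (Set.mem_Icc.mpr ⟨h, h1⟩) (Set.mem_Icc.mpr ⟨by norm_num, le_refl 1⟩) h1
    rw [Ftak_one] at this; exact this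

lemma Ftak_le {t : ℝ} (h0 : 0 ≤ t) (h1 : t ≤ 1) : Ftak t ≤ Real.log (4/3) := by
  rcases le_total t (1/3) with h | h
  · have := Ftak_mono (Set.mem_Icc.mpr ⟨h0, h⟩) (Set.mem_Icc.mpr ⟨by norm_num, by norm_num⟩) h
    rw [Ftak_third] at this; exact this
  · have := Ftak_anti (Set.mem_Icc.mpr ⟨le_refl _, by norm_num⟩) (Set.mem_Icc.mpr ⟨h, h1⟩) h
    rw [Ftak_third] at this; exact this

noncomputable def Ltak (x : ℝ) : ℝ := x * Real.logb 2 (1/x)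
noncomputable def Utak (x : ℝ) : ℝ := x * Real.logb 2 (4/(3*x))

lemma log2_pos : (0:ℝ) < Real.log 2 := Real.log_pos (by norm_num)

lemma KL_left {x : ℝ} (h0 : 0 ≤ x) (h : x ≤ 1/2) : Ltak x ≤ x + Ltak (2*x)/2 := by
  rcases eq_or_lt_of_le h0 with rfl | hx
  · simp [Ltak]
  · have : Ltak (2*x) = 2*x * (Real.logb 2 (1/x) - 1) := by
      unfold Ltak
      rw [show (1:ℝ)/(2*x) = (1/x)/2 by ring,
          Real.logb_div (by positivity) two_ne_zero, Real.logb_self_eq_one (b := 2) (by norm_num)]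
    rw [this]; unfold Ltak; ring_nf; linarith [le_refl (0:ℝ)]

lemma KU_left {x : ℝ} (h0 : 0 ≤ x) (h : x ≤ 1/2) : x + Utak (2*x)/2 ≤ Utak x := by
  rcases eq_or_lt_of_le h0 with rfl | hx
  · simp [Utak]
  · have : Utak (2*x) = 2*x * (Real.logb 2 (4/(3*x)) - 1) := by
      unfold Utak
      rw [show (4:ℝ)/(3*(2*x)) = (4/(3*x))/2 by ring,
          Real.logb_div (by positivity) two_ne_zero, Real.logb_self_eq_one (b := 2) (by norm_num)]
    rw [this]; unfold Utak; ring_nf; linarith [le_refl (0:ℝ)]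

lemma KL_right {x : ℝ} (h : 1/2 < x) (h1 : x ≤ 1) : Ltak x ≤ (1-x) + Ltak (2*x-1)/2 := by
  have hx : 0 < x := by linarith
  have ht : 0 < 2*x - 1 := by linarith
  have hF := Ftak_nonneg ht.le (by linarith : 2*x-1 ≤ 1)
  unfold Ftak at hF
  rw [show 1 + (2*x-1) = 2*x by ring, Real.log_mul two_ne_zero (ne_of_gt hx),
      show (4:ℝ) = 2^2 by norm_num, Real.log_pow] at hF
  push_cast at hF
  unfold Ltak
  rw [Real.logb, Real.logb, Real.log_div one_ne_zero (ne_of_gt hx),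
      Real.log_div one_ne_zero (ne_of_gt ht), Real.log_one]
  rw [← sub_nonneg]
  have expand : (1-x) + (2*x-1) * ((0 - Real.log (2*x-1))/Real.log 2) / 2
      - x * ((0 - Real.log x)/Real.log 2)
      = ((1-x)*Real.log 2 - (2*x-1)*Real.log (2*x-1)/2 + x*Real.log x) / Real.log 2 := by
    field_simp
    ring
  rw [expand]
  apply div_nonneg _ log2_pos.le
  nlinarith [hF]

lemma KU_right {x : ℝ} (h : 1/2 < x) (h1 : x ≤ 1) : (1-x) + Utak (2*x-1)/2 ≤ Utak x := by
  have hx : 0 < x := by linarith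
  have ht : 0 < 2*x - 1 := by linarith
  have hF := Ftak_le ht.le (by linarith : 2*x-1 ≤ 1)
  unfold Ftak at hF
  rw [show 1 + (2*x-1) = 2*x by ring, Real.log_mul two_ne_zero (ne_of_gt hx),
      Real.log_div (by norm_num : (4:ℝ) ≠ 0) (by norm_num : (3:ℝ) ≠ 0),
      show (4:ℝ) = 2^2 by norm_num, Real.log_pow] at hF
  push_cast at hF
  unfold Utak
  rw [Real.logb, Real.logb,
      Real.log_div (by norm_num : (4:ℝ) ≠ 0) (by positivity : 3*x ≠ 0),
      Real.log_div (by norm_num : (4:ℝ) ≠ 0) (by positivity : 3*(2*x-1) ≠ 0),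
      Real.log_mul (by norm_num : (3:ℝ) ≠ 0) (ne_of_gt hx),
      Real.log_mul (by norm_num : (3:ℝ) ≠ 0) (ne_of_gt ht),
      show (4:ℝ) = 2^2 by norm_num, Real.log_pow]
  push_cast
  rw [← sub_nonneg]
  have expand : x * ((2*Real.log 2 - (Real.log 3 + Real.log x))/Real.log 2)
      - ((1-x) + (2*x-1) * ((2*Real.log 2 - (Real.log 3 + Real.log (2*x-1)))/Real.log 2) / 2)
      = (x * (2*Real.log 2 - Real.log 3 - Real.log x)
         - (1-x)*Real.log 2 - (2*x-1)*(2*Real.log 2 - Real.log 3 - Real.log (2*x-1))/2) / Real.log 2 := by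
    field_simp
    ring
  rw [expand]
  apply div_nonneg _ log2_pos.le
  nlinarith [hF]

lemma Ltak_le_two {x : ℝ} (h0 : 0 ≤ x) (h1 : x ≤ 1) : Ltak x ≤ 2 := by
  rcases eq_or_lt_of_le h0 with rfl | hx
  · simp [Ltak]
  · unfold Ltak
    rw [Real.logb]
    have hlog : Real.log (1/x) ≤ 1/x - 1 := Real.log_le_sub_one_of_pos (by positivity)
    have hkey : x * Real.log (1/x) ≤ 1 := by
      calc x * Real.log (1/x) ≤ x * (1/x - 1) := by
            apply mul_le_mul_of_nonneg_left hlog h0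
        _ = 1 - x := by field_simp
        _ ≤ 1 := by linarith
    have h2 : (1:ℝ)/2 < Real.log 2 := by
      have := Real.log_two_gt_d9; linarith
    rw [mul_div_assoc', div_le_iff₀ log2_pos]
    linarith

lemma Utak_nonneg {x : ℝ} (h0 : 0 ≤ x) (h1 : x ≤ 1) : 0 ≤ Utak x := by
  rcases eq_or_lt_of_le h0 with rfl | hx
  · simp [Utak]
  · apply mul_nonneg h0
    apply Real.logb_nonneg (by norm_num)
    rw [le_div_iff₀ (by positivity)]
    linarith

lemma main_ind (n : ℕ) : ∀ x : ℝ, 0 ≤ x → x ≤ 1 →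
    Ltak x ≤ Tak x + 2*((2:ℝ)^n)⁻¹ ∧ Tak x ≤ Utak x + 2*((2:ℝ)^n)⁻¹ := by
  induction n with
  | zero =>
    intro x h0 h1
    constructor
    · have := Ltak_le_two h0 h1; have := Tak_nonneg x; simp; linarith
    · have := Tak_le_one x; have := Utak_nonneg h0 h1; simp; linarith
  | succ n ih =>
    intro x h0 h1
    have hhalf : (2:ℝ) * ((2:ℝ)^(n+1))⁻¹ = (2*((2:ℝ)^n)⁻¹)/2 := by
      rw [pow_succ]
      field_simp
    rcases le_or_gt x (1/2) with h | h
    · obtain ⟨ihL, ihU⟩ := ih (2*x) (by linarith) (by linarith)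
      have heq : Tak x = x + Tak (2*x)/2 := by
        rw [Tak_eq x, nid_eq_left h0 h]
      constructor
      · calc Ltak x ≤ x + Ltak (2*x)/2 := KL_left h0 h
          _ ≤ x + (Tak (2*x) + 2*((2:ℝ)^n)⁻¹)/2 := by linarith
          _ = Tak x + 2*((2:ℝ)^(n+1))⁻¹ := by rw [heq, hhalf]; ring
      · calc Tak x = x + Tak (2*x)/2 := heq
          _ ≤ x + (Utak (2*x) + 2*((2:ℝ)^n)⁻¹)/2 := by linarith
          _ = (x + Utak (2*x)/2) + 2*((2:ℝ)^(n+1))⁻¹ := by rw [hhalf]; ring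
          _ ≤ Utak x + 2*((2:ℝ)^(n+1))⁻¹ := by linarith [KU_left h0 h]
    · obtain ⟨ihL, ihU⟩ := ih (2*x-1) (by linarith) (by linarith)
      have heq : Tak x = (1-x) + Tak (2*x-1)/2 := by
        rw [Tak_eq x, nid_eq_right h.le h1, show 2*x = (2*x-1)+1 by ring, Tak_add_one]
        ring_nf
      constructor
      · calc Ltak x ≤ (1-x) + Ltak (2*x-1)/2 := KL_right h h1
          _ ≤ (1-x) + (Tak (2*x-1) + 2*((2:ℝ)^n)⁻¹)/2 := by linarith
          _ = Tak x + 2*((2:ℝ)^(n+1))⁻¹ := by rw [heq, hhalf]; ring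
      · calc Tak x = (1-x) + Tak (2*x-1)/2 := heq
          _ ≤ (1-x) + (Utak (2*x-1) + 2*((2:ℝ)^n)⁻¹)/2 := by linarith
          _ = ((1-x) + Utak (2*x-1)/2) + 2*((2:ℝ)^(n+1))⁻¹ := by rw [hhalf]; ring
          _ ≤ Utak x + 2*((2:ℝ)^(n+1))⁻¹ := by linarith [KU_right h h1]

theorem stmt18 {x : ℝ} (hx : x ∈ Set.Ioc (0 : ℝ) 1) :
    x * Real.logb 2 (1 / x) ≤ omegaT 2 x ∧
    omegaT 2 x ≤ x * Real.logb 2 (4 / (3 * x)) := by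
  obtain ⟨h0, h1⟩ := hx
  rw [omegaT_two]
  have key : ∀ ε : ℝ, 0 < ε → Ltak x ≤ Tak x + ε ∧ Tak x ≤ Utak x + ε := by
    intro ε hε
    obtain ⟨n, hn⟩ := exists_pow_lt_of_lt_one (by linarith : (0:ℝ) < ε/2) (by norm_num : (1:ℝ)/2 < 1)
    have h2 : 2*((2:ℝ)^n)⁻¹ < ε := by
      rw [show ((2:ℝ)^n)⁻¹ = (1/2)^n by rw [one_div, inv_pow]]
      linarith
    obtain ⟨hL, hU⟩ := main_ind n x h0.le h1
    exact ⟨by linarith, by linarith⟩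
  constructor
  · exact le_of_forall_pos_le_add (fun ε hε => (key ε hε).1)
  · exact le_of_forall_pos_le_add (fun ε hε => (key ε hε).2)
end
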